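/- Let k be a field of characteristic not equal to 2 and A a finite-dimensional unital associative k-algebra. Let r ∈ A⊗A be skew-symmetric, i.e. σ(r) = −r. Then r12·r13 + r13·r23 − r23·r12 = 0 in A⊗A⊗A if and only if F_r(a*)·F_r(b*) = F_r(R*(F_r(a*))b* + a* L*(F_r(b*))) for all a*, b* ∈ A*, i.e. F_r : A* → A is an O-operator of weight zero associated to the dual bimodule (A*,R*,L*). -/

import Mathlib

open TensorProduct

/-- `r ↦ r₁₂ = Σ aᵢ ⊗ bᵢ ⊗ 1` in `A ⊗ (A ⊗ A)`. -/
noncomputable def e12 (k A : Type) [Field k] [Ring A] [Algebra k A] :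
    A ⊗[k] A →ₗ[k] A ⊗[k] (A ⊗[k] A) :=
  TensorProduct.map LinearMap.id ((TensorProduct.mk k A A).flip 1)

/-- `r ↦ r₁₃ = Σ aᵢ ⊗ 1 ⊗ bᵢ` in `A ⊗ (A ⊗ A)`. -/
noncomputable def e13 (k A : Type) [Field k] [Ring A] [Algebra k A] :
    A ⊗[k] A →ₗ[k] A ⊗[k] (A ⊗[k] A) :=
  TensorProduct.map LinearMap.id (TensorProduct.mk k A A 1)

/-- `r ↦ r₂₃ = Σ 1 ⊗ aᵢ ⊗ bᵢ` in `A ⊗ (A ⊗ A)`. -/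
noncomputable def e23 (k A : Type) [Field k] [Ring A] [Algebra k A] :
    A ⊗[k] A →ₗ[k] A ⊗[k] (A ⊗[k] A) :=
  TensorProduct.mk k A (A ⊗[k] A) 1

/-- For `r ∈ A ⊗ A`, the induced map `F_r : A* → A`, characterized by
`b*(F_r(a*)) = (a* ⊗ b*)(r)`. -/
noncomputable def Fr {k A : Type} [Field k] [AddCommGroup A] [Module k A]
    (r : A ⊗[k] A) (f : Module.Dual k A) : A :=
  TensorProduct.lid k A (LinearMap.rTensor A f r)

section Aux

variable {k A : Type} [Field k] [Ring A] [Algebra k A]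

/-- Contraction of the first tensor factor against a dual functional. -/
noncomputable def ctr (f : Module.Dual k A) (M : Type) [AddCommGroup M] [Module k M] :
    A ⊗[k] M →ₗ[k] M :=
  (TensorProduct.lid k M).toLinearMap ∘ₗ LinearMap.rTensor M f

lemma ctr_tmul (f : Module.Dual k A) {M : Type} [AddCommGroup M] [Module k M]
    (x : A) (m : M) : ctr f M (x ⊗ₜ[k] m) = f x • m := by
  simp [ctr]

lemma Fr_tmul (x y : A) (f : Module.Dual k A) : Fr (x ⊗ₜ[k] y) f = f x • y := by
  simp [Fr]

lemma Fr_add (r s : A ⊗[k] A) (f : Module.Dual k A) :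
    Fr (r + s) f = Fr r f + Fr s f := by
  simp [Fr]

lemma Fr_zero (f : Module.Dual k A) : Fr (0 : A ⊗[k] A) f = 0 := by simp [Fr]

lemma Fr_neg (r : A ⊗[k] A) (f : Module.Dual k A) : Fr (-r) f = - Fr r f := by
  simp [Fr]

lemma Fr_add_dual (r : A ⊗[k] A) (f g : Module.Dual k A) :
    Fr r (f + g) = Fr r f + Fr r g := by
  simp [Fr, LinearMap.rTensor_add]

lemma Fr_zero_dual (r : A ⊗[k] A) : Fr r (0 : Module.Dual k A) = 0 := by
  simp [Fr]

lemma Fr_neg_dual (r : A ⊗[k] A) (f : Module.Dual k A) : Fr r (-f) = - Fr r f := by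
  have h := Fr_add_dual r f (-f)
  simp only [add_neg_cancel, Fr_zero_dual] at h
  exact eq_neg_of_add_eq_zero_right h.symm

lemma comp_mulLeft_zero (a : Module.Dual k A) :
    a ∘ₗ LinearMap.mulLeft k (0 : A) = 0 := by ext z; simp

lemma comp_mulRight_zero (b : Module.Dual k A) :
    b ∘ₗ LinearMap.mulRight k (0 : A) = 0 := by ext z; simp

/-- If all contractions of `t : A ⊗ M` against dual functionals vanish, then `t = 0`. -/
lemma ctr_forall_zero [FiniteDimensional k A] {M : Type} [AddCommGroup M] [Module k M]
    {t : A ⊗[k] M} (h : ∀ f : Module.Dual k A, ctr f M t = 0) : t = 0 := by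
  classical
  set b := Module.finBasis k A with hb
  have hrepr : ∀ s : A ⊗[k] M, s = ∑ i, b i ⊗ₜ[k] ctr (b.coord i) M s := by
    intro s
    induction s using TensorProduct.induction_on with
    | zero => simp
    | tmul x m =>
        have : ∀ i, b i ⊗ₜ[k] ctr (b.coord i) M (x ⊗ₜ[k] m)
            = (b.repr x i • b i) ⊗ₜ[k] m := by
          intro i
          rw [ctr_tmul, Module.Basis.coord_apply, ← smul_tmul]
        rw [Finset.sum_congr rfl fun i _ => this i, ← sum_tmul, b.sum_repr x]
    | add x y hx hy =>
        conv_lhs => rw [hx, hy]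
        rw [← Finset.sum_add_distrib]
        refine Finset.sum_congr rfl fun i _ => ?_
        rw [map_add, tmul_add]
  calc t = ∑ i, b i ⊗ₜ[k] ctr (b.coord i) M t := hrepr t
  _ = 0 := by simp [h]

variable (a b : Module.Dual k A)

lemma key1 (r s : A ⊗[k] A) :
    ctr b A (ctr a (A ⊗[k] A) (e12 k A r * e13 k A s)) =
      Fr s (a ∘ₗ LinearMap.mulLeft k (Fr (TensorProduct.comm k A A r) b)) := by
  induction r using TensorProduct.induction_on with
  | zero => simp [Fr_zero, Fr_zero_dual, comp_mulLeft_zero]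
  | add r₁ r₂ h₁ h₂ =>
      have hml : a ∘ₗ LinearMap.mulLeft k (Fr (TensorProduct.comm k A A r₁) b
            + Fr (TensorProduct.comm k A A r₂) b)
          = a ∘ₗ LinearMap.mulLeft k (Fr (TensorProduct.comm k A A r₁) b)
            + a ∘ₗ LinearMap.mulLeft k (Fr (TensorProduct.comm k A A r₂) b) := by
        ext z; simp [add_mul]
      simp [map_add, add_mul, h₁, h₂, Fr_add, hml, Fr_add_dual]
  | tmul x y =>
      induction s using TensorProduct.induction_on with
      | zero => simp [Fr_zero, Fr_zero_dual]
      | add s₁ s₂ h₁ h₂ => simp [map_add, mul_add, h₁, h₂, Fr_add]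
      | tmul u v =>
          simp only [e12, e13, TensorProduct.map_tmul, TensorProduct.mk_apply,
            LinearMap.id_coe, id_eq, LinearMap.flip_apply,
            Algebra.TensorProduct.tmul_mul_tmul, one_mul, mul_one,
            TensorProduct.comm_tmul, Fr_tmul, ctr_tmul, smul_smul]
          simp [ctr_tmul, LinearMap.comp_apply, LinearMap.mulLeft_apply,
            smul_mul_assoc, mul_smul_comm, smul_smul, mul_comm]

lemma key2 (r s : A ⊗[k] A) :
    ctr b A (ctr a (A ⊗[k] A) (e13 k A r * e23 k A s)) = Fr r a * Fr s b := by
  induction r using TensorProduct.induction_on with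
  | zero => simp [Fr_zero]
  | add r₁ r₂ h₁ h₂ => simp [map_add, add_mul, h₁, h₂, Fr_add]
  | tmul x y =>
      induction s using TensorProduct.induction_on with
      | zero => simp [Fr_zero]
      | add s₁ s₂ h₁ h₂ => simp [map_add, mul_add, h₁, h₂, Fr_add]
      | tmul u v =>
          simp only [e13, e23, TensorProduct.map_tmul, TensorProduct.mk_apply,
            LinearMap.id_coe, id_eq, Algebra.TensorProduct.tmul_mul_tmul, one_mul,
            mul_one, ctr_tmul, Fr_tmul, smul_smul]
          simp [ctr_tmul, smul_mul_assoc, mul_smul_comm, smul_smul, mul_comm]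

lemma key3 (r s : A ⊗[k] A) :
    ctr b A (ctr a (A ⊗[k] A) (e23 k A r * e12 k A s)) =
      Fr r (b ∘ₗ LinearMap.mulRight k (Fr s a)) := by
  induction r using TensorProduct.induction_on with
  | zero => simp [Fr_zero, Fr_zero_dual]
  | add r₁ r₂ h₁ h₂ => simp [map_add, add_mul, h₁, h₂, Fr_add]
  | tmul x y =>
      induction s using TensorProduct.induction_on with
      | zero => simp [Fr_zero, Fr_zero_dual, comp_mulRight_zero]
      | add s₁ s₂ h₁ h₂ =>
          have hmr : b ∘ₗ LinearMap.mulRight k (Fr s₁ a + Fr s₂ a)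
              = b ∘ₗ LinearMap.mulRight k (Fr s₁ a) + b ∘ₗ LinearMap.mulRight k (Fr s₂ a) := by
            ext z; simp [mul_add]
          simp [map_add, mul_add, h₁, h₂, Fr_add, hmr, Fr_add_dual]
      | tmul u v =>
          simp only [e23, e12, TensorProduct.map_tmul, TensorProduct.mk_apply,
            LinearMap.id_coe, id_eq, LinearMap.flip_apply,
            Algebra.TensorProduct.tmul_mul_tmul, one_mul, mul_one,
            ctr_tmul, Fr_tmul, smul_smul]
          simp [ctr_tmul, LinearMap.comp_apply, LinearMap.mulRight_apply,
            mul_smul_comm, smul_smul, mul_comm]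

end Aux

/-- Corollary 3.6(ii): a skew-symmetric `r ∈ A ⊗ A` is a solution of
the AYBE iff `F_r : A* → A` is an O-operator of weight zero associated to the dual
bimodule `(A*, R*, L*)`. -/
theorem stmt11 {k A : Type} [Field k] (hchar : (2 : k) ≠ 0)
    [Ring A] [Algebra k A] [FiniteDimensional k A]
    (r : A ⊗[k] A) (hskew : TensorProduct.comm k A A r = -r) :
    (e12 k A r * e13 k A r + e13 k A r * e23 k A r - e23 k A r * e12 k A r = 0) ↔
      (∀ a b : Module.Dual k A,
        Fr r a * Fr r b =
          Fr r ((b ∘ₗ LinearMap.mulRight k (Fr r a)) +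
            (a ∘ₗ LinearMap.mulLeft k (Fr r b)))) := by
  have key : ∀ a b : Module.Dual k A,
      ctr b A (ctr a (A ⊗[k] A)
        (e12 k A r * e13 k A r + e13 k A r * e23 k A r - e23 k A r * e12 k A r)) =
      Fr r a * Fr r b -
        Fr r ((b ∘ₗ LinearMap.mulRight k (Fr r a)) + (a ∘ₗ LinearMap.mulLeft k (Fr r b))) := by
    intro a b
    have h1 := key1 a b r r
    have h2 := key2 a b r r
    have h3 := key3 a b r r
    rw [hskew, Fr_neg] at h1
    have hmlneg : a ∘ₗ LinearMap.mulLeft k (-(Fr r b))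
        = -(a ∘ₗ LinearMap.mulLeft k (Fr r b)) := by
      ext z; simp
    rw [hmlneg, Fr_neg_dual] at h1
    rw [map_sub, map_add, map_sub, map_add, h1, h2, h3, Fr_add_dual]
    abel
  constructor
  · intro h a b
    have hk := key a b
    rw [h, map_zero, map_zero] at hk
    exact sub_eq_zero.mp hk.symm
  · intro h
    apply ctr_forall_zero
    intro f
    apply ctr_forall_zero
    intro g
    rw [key f g, sub_eq_zero]
    exact h f g
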